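/- arXiv:2011.11282 — 6 statements merged into one kernel-verified Lean document; each statement's English description precedes it below -/
import Mathlib

section
/- If Ω is a potential maximal clique of a graph G and some vertex v ∈ Ω has no neighbor outside Ω, then Ω = N[v], the closed neighborhood of v. -/
/-- The graph `H` with vertices of `Ω` made isolated (edges within `V \ Ω`). -/
def restrict {V : Type*} (H : SimpleGraph V) (Ω : Set V) : SimpleGraph V where
  Adj a b := H.Adj a b ∧ a ∉ Ω ∧ b ∉ Ω
  symm := ⟨fun _ _ ⟨h, ha, hb⟩ => ⟨h.symm, hb, ha⟩⟩
  loopless := ⟨fun _ h => H.irrefl h.1⟩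

/-- `C` is the vertex set of a connected component of `H \ Ω`. -/
def IsCompOf {V : Type*} (H : SimpleGraph V) (Ω C : Set V) : Prop :=
  ∃ a, a ∉ Ω ∧ C = {b | b ∉ Ω ∧ (restrict H Ω).Reachable a b}

/-- Neighborhood of a vertex set: vertices outside `C` adjacent to some vertex of `C`. -/
def nbhd {V : Type*} (H : SimpleGraph V) (C : Set V) : Set V :=
  {w | w ∉ C ∧ ∃ c ∈ C, H.Adj w c}

/-- `Ω` is a potential maximal clique of `H`. -/
def IsPMC {V : Type*} (H : SimpleGraph V) (Ω : Set V) : Prop :=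
  (∀ C, IsCompOf H Ω C → nbhd H C ≠ Ω) ∧
  (∀ u ∈ Ω, ∀ v ∈ Ω, u ≠ v →
    H.Adj u v ∨ ∃ C, IsCompOf H Ω C ∧ u ∈ nbhd H C ∧ v ∈ nbhd H C)

/-- A PMC is free if every vertex of `Ω` has a neighbor outside `Ω`. -/
def IsFree {V : Type*} (H : SimpleGraph V) (Ω : Set V) : Prop :=
  ∀ v ∈ Ω, ∃ w, w ∉ Ω ∧ H.Adj v w

theorem stmt0 {V : Type*} [Fintype V] (H : SimpleGraph V) (Ω : Set V)
    (hΩ : IsPMC H Ω) (v : V) (hv : v ∈ Ω)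
    (hno : ∀ w, H.Adj v w → w ∈ Ω) :
    Ω = insert v (H.neighborSet v) := by
  ext u
  constructor
  · intro hu
    by_cases huv : u = v
    · exact huv ▸ Set.mem_insert _ _
    · rcases hΩ.2 v hv u hu (fun h => huv h.symm) with hadj | ⟨C, ⟨a, haΩ, hC⟩, hvC, _⟩
      · exact Set.mem_insert_of_mem _ hadj
      · obtain ⟨_, c, hcC, hadj⟩ := hvC
        have : c ∉ Ω := (hC ▸ hcC).1
        exact absurd (hno c hadj) this
  · rintro (rfl | hu)
    · exact hv
    · exact hno u hu
end

section
/- A graph with n vertices has at most n potential maximal cliques that are not free, i.e., at most n PMCs Ω containing a vertex with no neighbor outside Ω. -/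
theorem stmt1 {V : Type*} [Fintype V] (H : SimpleGraph V) :
    {Ω : Set V | IsPMC H Ω ∧ ¬ IsFree H Ω}.ncard ≤ Fintype.card V := by
  classical
  set f : V → Set V := fun v => insert v {w | H.Adj v w} with hf
  have hsub : {Ω : Set V | IsPMC H Ω ∧ ¬ IsFree H Ω} ⊆ Set.range f := by
    rintro Ω ⟨⟨_, hpmc2⟩, hnf⟩
    simp only [IsFree, not_forall] at hnf
    obtain ⟨v, hvΩ, hv⟩ := hnf
    push_neg at hv
    -- every neighbor of v is in Ω
    have hnb : ∀ w, H.Adj v w → w ∈ Ω := by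
      intro w hw
      by_contra hwΩ
      exact (hv w hwΩ) hw
    refine ⟨v, ?_⟩
    apply Set.Subset.antisymm
    · rintro w (rfl | hw)
      · exact hvΩ
      · exact hnb w hw
    · intro u huΩ
      by_cases huv : u = v
      · exact huv ▸ Set.mem_insert _ _
      · rcases hpmc2 u huΩ v hvΩ huv with hadj | ⟨C, ⟨a, haΩ, hC⟩, _, hvC⟩
        · exact Set.mem_insert_iff.2 (Or.inr hadj.symm)
        · exfalso
          obtain ⟨_, c, hcC, hvc⟩ := hvC
          have hcΩ : c ∉ Ω := by
            rw [hC] at hcC; exact hcC.1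
          exact hcΩ (hnb c hvc)
  calc {Ω : Set V | IsPMC H Ω ∧ ¬ IsFree H Ω}.ncard
      ≤ (Set.range f).ncard :=
        Set.ncard_le_ncard hsub (Set.finite_range f)
    _ = (f '' Set.univ).ncard := by rw [Set.image_univ]
    _ ≤ Set.univ.ncard := Set.ncard_image_le Set.finite_univ
    _ = Fintype.card V := Set.ncard_univ V ▸ (Nat.card_eq_fintype_card)
end

section
/- In the graph G_k defined below, if {P_1, P_2, P_3} is a partition of [k] into three nonempty parts and Ω is the set of pair-vertices {i,j} with i, j in different parts, then Ω is a free PMC: every vertex of Ω has a neighbor in V(G_k) \ Ω. Moreover G_k \ Ω has exactly three connected components, namely P_t ∪ C(P_t, 2) for t ∈ {1,2,3}. -/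
/-- Vertices of `G_k`: `[k]` together with the 2-element subsets of `[k]`. -/
abbrev GkV (k : ℕ) := Fin k ⊕ {S : Finset (Fin k) // S.card = 2}

/-- The incidence graph of 2-element subsets of `[k]` over `[k]`. -/
def Gk (k : ℕ) : SimpleGraph (GkV k) where
  Adj a b := match a, b with
    | .inl i, .inr S => i ∈ S.val
    | .inr S, .inl i => i ∈ S.val
    | _, _ => False
  symm := ⟨by rintro (i|S) (j|T) h <;> simp_all⟩
  loopless := ⟨by rintro (i|S) h <;> simp_all⟩

/-- `{P1, P2, P3}` is a partition of `[k]` into three nonempty parts. -/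
def IsTripartition {k : ℕ} (P1 P2 P3 : Set (Fin k)) : Prop :=
  P1.Nonempty ∧ P2.Nonempty ∧ P3.Nonempty ∧
  Disjoint P1 P2 ∧ Disjoint P1 P3 ∧ Disjoint P2 P3 ∧ P1 ∪ P2 ∪ P3 = Set.univ

/-- The set of pair-vertices `{i, j}` with `i` and `j` in different parts of `{P1, P2, P3}`. -/
def Omega3 {k : ℕ} (P1 P2 P3 : Set (Fin k)) : Set (GkV k) :=
  {x | ∃ S : {S : Finset (Fin k) // S.card = 2}, x = Sum.inr S ∧
    ∃ i ∈ S.val, ∃ j ∈ S.val, i ≠ j ∧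
      ¬((i ∈ P1 ∧ j ∈ P1) ∨ (i ∈ P2 ∧ j ∈ P2) ∨ (i ∈ P3 ∧ j ∈ P3))}

/-- The component of `G_k \ Ω` associated to a part `P`: `P ∪ C(P, 2)`. -/
def partComp {k : ℕ} (P : Set (Fin k)) : Set (GkV k) :=
  {x | (∃ i ∈ P, x = Sum.inl i) ∨
    ∃ S : {S : Finset (Fin k) // S.card = 2}, x = Sum.inr S ∧ ↑S.val ⊆ P}

section helpers
variable {k : ℕ} {P1 P2 P3 : Set (Fin k)}

lemma inl_notin (i : Fin k) : Sum.inl i ∉ Omega3 P1 P2 P3 := by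
  rintro ⟨S, h, -⟩; simp at h

lemma inl_mem_partComp {P : Set (Fin k)} {i : Fin k} :
    Sum.inl i ∈ partComp (k := k) P ↔ i ∈ P := by
  simp [partComp]

lemma inr_mem_partComp {P : Set (Fin k)} {S : {S : Finset (Fin k) // S.card = 2}} :
    Sum.inr S ∈ partComp (k := k) P ↔ ↑S.val ⊆ P := by
  constructor
  · rintro (⟨i, -, h⟩ | ⟨T, hT, h⟩)
    · simp at h
    · obtain rfl : T = S := (Sum.inr.inj hT).symm; exact h
  · intro h; exact Or.inr ⟨S, rfl, h⟩

lemma inr_mem_Omega {S : {S : Finset (Fin k) // S.card = 2}} :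
    Sum.inr S ∈ Omega3 P1 P2 P3 ↔
      ¬(↑S.val ⊆ P1 ∨ ↑S.val ⊆ P2 ∨ ↑S.val ⊆ P3) := by
  constructor
  · rintro ⟨T, hT, i, hi, j, hj, hij, hnot⟩ hsub
    obtain rfl : T = S := (Sum.inr.inj hT).symm
    apply hnot
    rcases hsub with h|h|h
    · exact Or.inl ⟨h hi, h hj⟩
    · exact Or.inr (Or.inl ⟨h hi, h hj⟩)
    · exact Or.inr (Or.inr ⟨h hi, h hj⟩)
  · intro h
    obtain ⟨i, j, hij, hS⟩ := Finset.card_eq_two.mp S.2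
    refine ⟨S, rfl, i, by simp [hS], j, by simp [hS], hij, fun hc => h ?_⟩
    have hsub : ∀ Q : Set (Fin k), i ∈ Q → j ∈ Q → ↑S.val ⊆ Q := by
      intro Q hiQ hjQ x hx
      rw [hS] at hx
      simp at hx
      rcases hx with rfl|rfl <;> assumption
    rcases hc with ⟨h1,h2⟩|⟨h1,h2⟩|⟨h1,h2⟩
    · exact Or.inl (hsub _ h1 h2)
    · exact Or.inr (Or.inl (hsub _ h1 h2))
    · exact Or.inr (Or.inr (hsub _ h1 h2))

end helpers

section main
variable {k : ℕ} {P1 P2 P3 : Set (Fin k)} (hpart : IsTripartition P1 P2 P3)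
include hpart

lemma covers (i : Fin k) : i ∈ P1 ∨ i ∈ P2 ∨ i ∈ P3 := by
  obtain ⟨-,-,-,-,-,-,hcov⟩ := hpart
  have : i ∈ P1 ∪ P2 ∪ P3 := hcov ▸ Set.mem_univ i
  rcases this with (h|h)|h
  exacts [Or.inl h, Or.inr (Or.inl h), Or.inr (Or.inr h)]

lemma part_unique {P Q : Set (Fin k)} (hP : P = P1 ∨ P = P2 ∨ P = P3)
    (hQ : Q = P1 ∨ Q = P2 ∨ Q = P3) {i : Fin k} (hiP : i ∈ P) (hiQ : i ∈ Q) : P = Q := by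
  obtain ⟨-,-,-,d12,d13,d23,-⟩ := hpart
  rcases hP with rfl|rfl|rfl <;> rcases hQ with rfl|rfl|rfl <;> first
    | rfl
    | exact absurd hiQ (Set.disjoint_left.mp d12 hiP)
    | exact absurd hiQ (Set.disjoint_left.mp d13 hiP)
    | exact absurd hiQ (Set.disjoint_left.mp d23 hiP)
    | exact absurd hiP (Set.disjoint_left.mp d12 hiQ)
    | exact absurd hiP (Set.disjoint_left.mp d13 hiQ)
    | exact absurd hiP (Set.disjoint_left.mp d23 hiQ)

lemma partComp_notOmega {P : Set (Fin k)} (hP : P = P1 ∨ P = P2 ∨ P = P3) :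
    ∀ x ∈ partComp P, x ∉ Omega3 P1 P2 P3 := by
  rintro (i|S) hx
  · exact inl_notin i
  · rw [inr_mem_partComp] at hx
    rw [inr_mem_Omega, not_not]
    rcases hP with rfl|rfl|rfl
    exacts [Or.inl hx, Or.inr (Or.inl hx), Or.inr (Or.inr hx)]

lemma step {P : Set (Fin k)} (hP : P = P1 ∨ P = P2 ∨ P = P3) {x y : GkV k}
    (hx : x ∈ partComp P) (hxy : (restrict (Gk k) (Omega3 P1 P2 P3)).Adj x y) :
    y ∈ partComp P := by
  obtain ⟨hadj, -, hy⟩ := hxy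
  match x, y with
  | Sum.inl i, Sum.inl j => exact absurd hadj (by simp [Gk])
  | Sum.inr S, Sum.inr T => exact absurd hadj (by simp [Gk])
  | Sum.inl i, Sum.inr S =>
    have hiS : i ∈ S.val := hadj
    have hiP : i ∈ P := inl_mem_partComp.mp hx
    rw [inr_mem_Omega, not_not] at hy
    rw [inr_mem_partComp]
    rcases hy with h|h|h
    · rwa [part_unique hpart hP (Or.inl rfl) hiP (h hiS)]
    · rwa [part_unique hpart hP (Or.inr (Or.inl rfl)) hiP (h hiS)]
    · rwa [part_unique hpart hP (Or.inr (Or.inr rfl)) hiP (h hiS)]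
  | Sum.inr S, Sum.inl j =>
    have hjS : j ∈ S.val := hadj
    have hS : ↑S.val ⊆ P := inr_mem_partComp.mp hx
    exact inl_mem_partComp.mpr (hS hjS)

lemma reach_of_mem {P : Set (Fin k)} (hP : P = P1 ∨ P = P2 ∨ P = P3) {a b : GkV k}
    (ha : a ∈ partComp P) (hb : b ∈ partComp P) :
    (restrict (Gk k) (Omega3 P1 P2 P3)).Reachable a b := by
  -- first: from any vertex of partComp P reach some inl i with i ∈ P
  have key : ∀ x ∈ partComp P, ∃ i ∈ P,
      (restrict (Gk k) (Omega3 P1 P2 P3)).Reachable x (Sum.inl i) := by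
    rintro (i|S) hx
    · exact ⟨i, inl_mem_partComp.mp hx, SimpleGraph.Reachable.refl _⟩
    · have hS : ↑S.val ⊆ P := inr_mem_partComp.mp hx
      obtain ⟨i, hi⟩ := Finset.card_pos.mp (by rw [S.2]; norm_num)
      refine ⟨i, hS hi, SimpleGraph.Adj.reachable ?_⟩
      exact ⟨hi, partComp_notOmega hpart hP _ hx, inl_notin i⟩
  -- inl i reach inl j for i j ∈ P
  have key2 : ∀ i ∈ P, ∀ j ∈ P,
      (restrict (Gk k) (Omega3 P1 P2 P3)).Reachable (Sum.inl i) (Sum.inl j) := by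
    intro i hi j hj
    by_cases hij : i = j
    · subst hij; exact SimpleGraph.Reachable.refl _
    · set S : {S : Finset (Fin k) // S.card = 2} := ⟨{i, j}, Finset.card_pair hij⟩ with hSdef
      have hsub : ↑S.val ⊆ P := by
        intro x hx
        simp [hSdef] at hx
        rcases hx with rfl|rfl <;> assumption
      have hSmem : Sum.inr S ∈ partComp P := inr_mem_partComp.mpr hsub
      have hSno := partComp_notOmega hpart hP _ hSmem
      have h1 : (restrict (Gk k) (Omega3 P1 P2 P3)).Adj (Sum.inl i) (Sum.inr S) :=
        ⟨by simp [Gk, hSdef], inl_notin i, hSno⟩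
      have h2 : (restrict (Gk k) (Omega3 P1 P2 P3)).Adj (Sum.inr S) (Sum.inl j) :=
        ⟨by simp [Gk, hSdef], hSno, inl_notin j⟩
      exact h1.reachable.trans h2.reachable
  obtain ⟨i, hi, hri⟩ := key a ha
  obtain ⟨j, hj, hrj⟩ := key b hb
  exact (hri.trans (key2 i hi j hj)).trans hrj.symm

lemma comp_eq {P : Set (Fin k)} (hP : P = P1 ∨ P = P2 ∨ P = P3) {a : GkV k}
    (ha : a ∈ partComp P) :
    {b | b ∉ Omega3 P1 P2 P3 ∧ (restrict (Gk k) (Omega3 P1 P2 P3)).Reachable a b}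
      = partComp P := by
  have walk_mem : ∀ {x y : GkV k}, (restrict (Gk k) (Omega3 P1 P2 P3)).Walk x y →
      x ∈ partComp P → y ∈ partComp P := by
    intro x y w
    induction w with
    | nil => exact id
    | cons h p ih => exact fun hx => ih (step hpart hP hx h)
  ext b
  constructor
  · rintro ⟨-, ⟨w⟩⟩
    exact walk_mem w ha
  · intro hb
    exact ⟨partComp_notOmega hpart hP _ hb, reach_of_mem hpart hP ha hb⟩

lemma isComp_partComp {P : Set (Fin k)} (hP : P = P1 ∨ P = P2 ∨ P = P3)
    (hne : P.Nonempty) : IsCompOf (Gk k) (Omega3 P1 P2 P3) (partComp P) := by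
  obtain ⟨i, hi⟩ := hne
  have ha : Sum.inl i ∈ partComp P := inl_mem_partComp.mpr hi
  exact ⟨Sum.inl i, inl_notin i, (comp_eq hpart hP ha).symm⟩

end main

section main2
variable {k : ℕ} {P1 P2 P3 : Set (Fin k)} (hpart : IsTripartition P1 P2 P3)
include hpart

omit hpart in
lemma pair_mem_Omega {j l : Fin k} (hjl : j ≠ l)
    (h : ¬((j∈P1∧l∈P1)∨(j∈P2∧l∈P2)∨(j∈P3∧l∈P3))) :
    Sum.inr ⟨{j,l}, Finset.card_pair hjl⟩ ∈ Omega3 P1 P2 P3 :=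
  ⟨_, rfl, j, by simp, l, by simp, hjl, h⟩

omit hpart in
lemma notin_nbhd {P : Set (Fin k)} {S : {S : Finset (Fin k) // S.card = 2}}
    (hS : ∀ m ∈ S.val, m ∉ P) : Sum.inr S ∉ nbhd (Gk k) (partComp P) := by
  rintro ⟨-, (m|T), hc, hadj⟩
  · exact hS m hadj (inl_mem_partComp.mp hc)
  · exact hadj

lemma mem_nbhd_partComp {P : Set (Fin k)} (hP : P = P1 ∨ P = P2 ∨ P = P3)
    {S : {S : Finset (Fin k) // S.card = 2}} (hS : Sum.inr S ∈ Omega3 P1 P2 P3)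
    {i : Fin k} (hiS : i ∈ S.val) (hiP : i ∈ P) :
    Sum.inr S ∈ nbhd (Gk k) (partComp P) := by
  refine ⟨fun hmem => partComp_notOmega hpart hP _ hmem hS,
    Sum.inl i, inl_mem_partComp.mpr hiP, hiS⟩

lemma crosses {S : {S : Finset (Fin k) // S.card = 2}} (hS : Sum.inr S ∈ Omega3 P1 P2 P3) :
    ((∃i∈S.val,i∈P1)∧(∃i∈S.val,i∈P2)) ∨ ((∃i∈S.val,i∈P1)∧(∃i∈S.val,i∈P3)) ∨
      ((∃i∈S.val,i∈P2)∧(∃i∈S.val,i∈P3)) := by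
  rw [inr_mem_Omega] at hS
  obtain ⟨i, j, hij, hpair⟩ := Finset.card_eq_two.mp S.2
  have hiS : i ∈ S.val := by rw [hpair]; simp
  have hjS : j ∈ S.val := by rw [hpair]; simp
  have hsub : ∀ Q : Set (Fin k), i ∈ Q → j ∈ Q → ↑S.val ⊆ Q := by
    intro Q h1 h2 x hx
    rw [hpair] at hx; simp at hx
    rcases hx with rfl|rfl <;> assumption
  rcases covers hpart i with hi|hi|hi <;> rcases covers hpart j with hj|hj|hj
  · exact absurd (Or.inl (hsub _ hi hj)) hS
  · exact Or.inl ⟨⟨i,hiS,hi⟩,⟨j,hjS,hj⟩⟩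
  · exact Or.inr (Or.inl ⟨⟨i,hiS,hi⟩,⟨j,hjS,hj⟩⟩)
  · exact Or.inl ⟨⟨j,hjS,hj⟩,⟨i,hiS,hi⟩⟩
  · exact absurd (Or.inr (Or.inl (hsub _ hi hj))) hS
  · exact Or.inr (Or.inr ⟨⟨i,hiS,hi⟩,⟨j,hjS,hj⟩⟩)
  · exact Or.inr (Or.inl ⟨⟨j,hjS,hj⟩,⟨i,hiS,hi⟩⟩)
  · exact Or.inr (Or.inr ⟨⟨j,hjS,hj⟩,⟨i,hiS,hi⟩⟩)
  · exact absurd (Or.inr (Or.inr (hsub _ hi hj))) hS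

lemma comps_eq :
    {C | IsCompOf (Gk k) (Omega3 P1 P2 P3) C}
      = {partComp P1, partComp P2, partComp P3} := by
  obtain ⟨h1, h2, h3, -⟩ := id hpart
  ext C
  constructor
  · rintro ⟨a, haΩ, rfl⟩
    have : ∃ P, (P = P1 ∨ P = P2 ∨ P = P3) ∧ a ∈ partComp P := by
      match a with
      | Sum.inl i =>
        rcases covers hpart i with h|h|h
        exacts [⟨P1, Or.inl rfl, inl_mem_partComp.mpr h⟩,
          ⟨P2, Or.inr (Or.inl rfl), inl_mem_partComp.mpr h⟩,
          ⟨P3, Or.inr (Or.inr rfl), inl_mem_partComp.mpr h⟩]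
      | Sum.inr S =>
        rw [inr_mem_Omega, not_not] at haΩ
        rcases haΩ with h|h|h
        exacts [⟨P1, Or.inl rfl, inr_mem_partComp.mpr h⟩,
          ⟨P2, Or.inr (Or.inl rfl), inr_mem_partComp.mpr h⟩,
          ⟨P3, Or.inr (Or.inr rfl), inr_mem_partComp.mpr h⟩]
    obtain ⟨P, hP, ha⟩ := this
    rw [comp_eq hpart hP ha]
    rcases hP with rfl|rfl|rfl
    exacts [Or.inl rfl, Or.inr (Or.inl rfl), Or.inr (Or.inr rfl)]
  · rintro (rfl|rfl|rfl)
    exacts [isComp_partComp hpart (Or.inl rfl) h1,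
      isComp_partComp hpart (Or.inr (Or.inl rfl)) h2,
      isComp_partComp hpart (Or.inr (Or.inr rfl)) h3]

end main2

theorem stmt6 (k : ℕ) (P1 P2 P3 : Set (Fin k)) (hpart : IsTripartition P1 P2 P3) :
    IsPMC (Gk k) (Omega3 P1 P2 P3) ∧ IsFree (Gk k) (Omega3 P1 P2 P3) ∧
    {C | IsCompOf (Gk k) (Omega3 P1 P2 P3) C} = {partComp P1, partComp P2, partComp P3} := by
  have hcomps := comps_eq hpart
  obtain ⟨hne1, hne2, hne3, d12, d13, d23, -⟩ := id hpart
  obtain ⟨a1, h1⟩ := hne1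
  obtain ⟨a2, h2⟩ := hne2
  obtain ⟨a3, h3⟩ := hne3
  refine ⟨⟨?_, ?_⟩, ?_, hcomps⟩
  · -- condition 1
    intro C hC hEq
    have hC' : C ∈ ({partComp P1, partComp P2, partComp P3} : Set (Set (GkV k))) :=
      hcomps ▸ hC
    rcases hC' with rfl|rfl|rfl
    · have hne : a2 ≠ a3 := fun h => Set.disjoint_left.mp d23 h2 (h ▸ h3)
      have hmem : Sum.inr ⟨{a2,a3}, Finset.card_pair hne⟩ ∈ Omega3 P1 P2 P3 := by
        refine pair_mem_Omega hne ?_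
        rintro (⟨x,y⟩|⟨x,y⟩|⟨x,y⟩)
        · exact Set.disjoint_left.mp d12 x h2
        · exact Set.disjoint_left.mp d23 y h3
        · exact Set.disjoint_left.mp d23 h2 x
      have hnot : Sum.inr ⟨{a2,a3}, Finset.card_pair hne⟩ ∉ nbhd (Gk k) (partComp P1) := by
        apply notin_nbhd
        intro m hm
        simp only [Finset.mem_insert, Finset.mem_singleton] at hm
        rcases hm with rfl|rfl
        · exact fun h => Set.disjoint_left.mp d12 h h2
        · exact fun h => Set.disjoint_left.mp d13 h h3
      rw [← hEq] at hmem
      exact hnot hmem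
    · have hne : a1 ≠ a3 := fun h => Set.disjoint_left.mp d13 h1 (h ▸ h3)
      have hmem : Sum.inr ⟨{a1,a3}, Finset.card_pair hne⟩ ∈ Omega3 P1 P2 P3 := by
        refine pair_mem_Omega hne ?_
        rintro (⟨x,y⟩|⟨x,y⟩|⟨x,y⟩)
        · exact Set.disjoint_left.mp d13 y h3
        · exact Set.disjoint_left.mp d12 h1 x
        · exact Set.disjoint_left.mp d13 h1 x
      have hnot : Sum.inr ⟨{a1,a3}, Finset.card_pair hne⟩ ∉ nbhd (Gk k) (partComp P2) := by
        apply notin_nbhd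
        intro m hm
        simp only [Finset.mem_insert, Finset.mem_singleton] at hm
        rcases hm with rfl|rfl
        · exact fun h => Set.disjoint_left.mp d12 h1 h
        · exact fun h => Set.disjoint_left.mp d23 h h3
      rw [← hEq] at hmem
      exact hnot hmem
    · have hne : a1 ≠ a2 := fun h => Set.disjoint_left.mp d12 h1 (h ▸ h2)
      have hmem : Sum.inr ⟨{a1,a2}, Finset.card_pair hne⟩ ∈ Omega3 P1 P2 P3 := by
        refine pair_mem_Omega hne ?_
        rintro (⟨x,y⟩|⟨x,y⟩|⟨x,y⟩)
        · exact Set.disjoint_left.mp d12 y h2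
        · exact Set.disjoint_left.mp d12 h1 x
        · exact Set.disjoint_left.mp d13 h1 x
      have hnot : Sum.inr ⟨{a1,a2}, Finset.card_pair hne⟩ ∉ nbhd (Gk k) (partComp P3) := by
        apply notin_nbhd
        intro m hm
        simp only [Finset.mem_insert, Finset.mem_singleton] at hm
        rcases hm with rfl|rfl
        · exact fun h => Set.disjoint_left.mp d13 h1 h
        · exact fun h => Set.disjoint_left.mp d23 h2 h
      rw [← hEq] at hmem
      exact hnot hmem
  · -- condition 2
    intro u hu v hv huv
    obtain (i|S) := u
    · exact absurd hu (inl_notin i)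
    obtain (j|T) := v
    · exact absurd hv (inl_notin j)
    right
    have hScr := crosses hpart hu
    have hTcr := crosses hpart hv
    have key : ∀ P : Set (Fin k), (P = P1 ∨ P = P2 ∨ P = P3) →
        (∃ i ∈ S.val, i ∈ P) → (∃ i ∈ T.val, i ∈ P) →
        ∃ C, IsCompOf (Gk k) (Omega3 P1 P2 P3) C ∧
          Sum.inr S ∈ nbhd (Gk k) C ∧ Sum.inr T ∈ nbhd (Gk k) C := by
      rintro P hP ⟨i, hiS, hiP⟩ ⟨j, hjT, hjP⟩
      exact ⟨partComp P, isComp_partComp hpart hP ⟨i, hiP⟩,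
        mem_nbhd_partComp hpart hP hu hiS hiP, mem_nbhd_partComp hpart hP hv hjT hjP⟩
    rcases hScr with ⟨hSa,hSb⟩|⟨hSa,hSb⟩|⟨hSa,hSb⟩ <;>
      rcases hTcr with ⟨hTa,hTb⟩|⟨hTa,hTb⟩|⟨hTa,hTb⟩
    · exact key P1 (Or.inl rfl) hSa hTa
    · exact key P1 (Or.inl rfl) hSa hTa
    · exact key P2 (Or.inr (Or.inl rfl)) hSb hTa
    · exact key P1 (Or.inl rfl) hSa hTa
    · exact key P1 (Or.inl rfl) hSa hTa
    · exact key P3 (Or.inr (Or.inr rfl)) hSb hTb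
    · exact key P2 (Or.inr (Or.inl rfl)) hSa hTb
    · exact key P3 (Or.inr (Or.inr rfl)) hSb hTb
    · exact key P2 (Or.inr (Or.inl rfl)) hSa hTa
  · -- free
    intro v hv
    obtain (i|S) := v
    · exact absurd hv (inl_notin i)
    obtain ⟨i, hi⟩ := Finset.card_pos.mp (by rw [S.2]; norm_num)
    exact ⟨Sum.inl i, inl_notin i, hi⟩
end

section
/- The map sending a partition {P_1, P_2, P_3} of [k] into three nonempty parts to the set Ω of pair-vertices {i,j} with i, j in different parts is injective. Consequently the graph G_k has at least S(k,3) distinct potential maximal cliques Ω with Ω ∩ [k] = ∅, where S(k,3) is the Stirling number of the second kind. -/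
/-- Stirling numbers of the second kind. -/
def stirling : ℕ → ℕ → ℕ
  | 0, 0 => 1
  | 0, _ + 1 => 0
  | _ + 1, 0 => 0
  | n + 1, j + 1 => (j + 1) * stirling n (j + 1) + stirling n j

section Helpers

variable {k : ℕ}

def same (P1 P2 P3 : Set (Fin k)) (i j : Fin k) : Prop :=
  (i ∈ P1 ∧ j ∈ P1) ∨ (i ∈ P2 ∧ j ∈ P2) ∨ (i ∈ P3 ∧ j ∈ P3)

lemma same_symm {P1 P2 P3 : Set (Fin k)} {i j : Fin k} (h : same P1 P2 P3 i j) :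
    same P1 P2 P3 j i := by unfold same at *; tauto

lemma inl_not_mem_Omega3 {P1 P2 P3 : Set (Fin k)} (i : Fin k) :
    Sum.inl i ∉ Omega3 P1 P2 P3 := by
  rintro ⟨S, hS, -⟩; exact Sum.inl_ne_inr hS

lemma mem_Omega3_iff {P1 P2 P3 : Set (Fin k)} {i j : Fin k} (hij : i ≠ j)
    (S : {S : Finset (Fin k) // S.card = 2}) (hS : S.val = {i, j}) :
    Sum.inr S ∈ Omega3 P1 P2 P3 ↔ ¬ same P1 P2 P3 i j := by
  constructor
  · rintro ⟨T, hT, a, ha, b, hb, hab, hnab⟩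
    obtain rfl : T = S := by
      cases hT; rfl
    rw [hS] at ha hb
    simp only [Finset.mem_insert, Finset.mem_singleton] at ha hb
    intro hsame
    rcases ha with rfl | rfl <;> rcases hb with rfl | rfl
    · exact hab rfl
    · exact hnab hsame
    · exact hnab (same_symm hsame)
    · exact hab rfl
  · intro h
    refine ⟨S, rfl, i, ?_, j, ?_, hij, h⟩ <;> simp [hS]

/-- the class of `i` -/
def cl (P1 P2 P3 : Set (Fin k)) (i : Fin k) : Set (Fin k) := {j | same P1 P2 P3 i j}

lemma cl_comm12 (P1 P2 P3 : Set (Fin k)) : cl P1 P2 P3 = cl P2 P1 P3 := by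
  funext i; ext j; simp only [cl, same, Set.mem_setOf_eq]; tauto

lemma cl_comm23 (P1 P2 P3 : Set (Fin k)) : cl P1 P2 P3 = cl P1 P3 P2 := by
  funext i; ext j; simp only [cl, same, Set.mem_setOf_eq]; tauto

lemma cl_eq₁ {P1 P2 P3 : Set (Fin k)} (h12 : Disjoint P1 P2) (h13 : Disjoint P1 P3)
    {i : Fin k} (hi : i ∈ P1) : cl P1 P2 P3 i = P1 := by
  have h2 := Set.disjoint_left.mp h12 hi
  have h3 := Set.disjoint_left.mp h13 hi
  ext j
  simp only [cl, same, Set.mem_setOf_eq]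
  constructor
  · rintro (⟨-, hj⟩ | ⟨hi2, -⟩ | ⟨hi3, -⟩)
    · exact hj
    · exact absurd hi2 h2
    · exact absurd hi3 h3
  · intro hj; exact Or.inl ⟨hi, hj⟩

lemma mem_cover {P1 P2 P3 : Set (Fin k)} (hT : IsTripartition P1 P2 P3) (i : Fin k) :
    i ∈ P1 ∨ i ∈ P2 ∨ i ∈ P3 := by
  obtain ⟨-, -, -, -, -, -, hu⟩ := hT
  have : i ∈ P1 ∪ P2 ∪ P3 := hu ▸ Set.mem_univ i
  rcases this with (h | h) | h <;> tauto

lemma same_refl {P1 P2 P3 : Set (Fin k)} (hT : IsTripartition P1 P2 P3) (i : Fin k) :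
    same P1 P2 P3 i i := by
  rcases mem_cover hT i with h | h | h
  exacts [Or.inl ⟨h, h⟩, Or.inr (Or.inl ⟨h, h⟩), Or.inr (Or.inr ⟨h, h⟩)]

lemma cl_part {P1 P2 P3 : Set (Fin k)} (hT : IsTripartition P1 P2 P3) (i : Fin k) :
    cl P1 P2 P3 i = P1 ∨ cl P1 P2 P3 i = P2 ∨ cl P1 P2 P3 i = P3 := by
  obtain ⟨-, -, -, h12, h13, h23, -⟩ := id hT
  rcases mem_cover hT i with h | h | h
  · exact Or.inl (cl_eq₁ h12 h13 h)
  · refine Or.inr (Or.inl ?_)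
    rw [cl_comm12]; exact cl_eq₁ h12.symm h23 h
  · refine Or.inr (Or.inr ?_)
    rw [cl_comm23, cl_comm12]; exact cl_eq₁ h13.symm h23.symm h

lemma range_cl {P1 P2 P3 : Set (Fin k)} (hT : IsTripartition P1 P2 P3) :
    Set.range (cl P1 P2 P3) = {P1, P2, P3} := by
  obtain ⟨h1, h2, h3, h12, h13, h23, -⟩ := id hT
  apply Set.Subset.antisymm
  · rintro X ⟨i, rfl⟩
    rcases cl_part hT i with h | h | h <;> simp [h]
  · rintro X (rfl | rfl | rfl)
    · obtain ⟨p, hp⟩ := h1; exact ⟨p, cl_eq₁ h12 h13 hp⟩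
    · obtain ⟨p, hp⟩ := h2; exact ⟨p, by rw [cl_comm12]; exact cl_eq₁ h12.symm h23 hp⟩
    · obtain ⟨p, hp⟩ := h3; exact ⟨p, by rw [cl_comm23, cl_comm12]; exact cl_eq₁ h13.symm h23.symm hp⟩

lemma same_iff_of_omega_eq {P1 P2 P3 Q1 Q2 Q3 : Set (Fin k)}
    (hP : IsTripartition P1 P2 P3) (hQ : IsTripartition Q1 Q2 Q3)
    (h : Omega3 P1 P2 P3 = Omega3 Q1 Q2 Q3) (i j : Fin k) :
    same P1 P2 P3 i j ↔ same Q1 Q2 Q3 i j := by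
  rcases eq_or_ne i j with rfl | hij
  · simp [same_refl hP, same_refl hQ]
  · set S : {S : Finset (Fin k) // S.card = 2} := ⟨{i, j}, Finset.card_pair hij⟩
    have hm : Sum.inr S ∈ Omega3 P1 P2 P3 ↔ Sum.inr S ∈ Omega3 Q1 Q2 Q3 := by rw [h]
    rw [mem_Omega3_iff hij S rfl, mem_Omega3_iff hij S rfl] at hm
    exact not_iff_not.mp hm

lemma triple_eq_of_omega_eq {P1 P2 P3 Q1 Q2 Q3 : Set (Fin k)}
    (hP : IsTripartition P1 P2 P3) (hQ : IsTripartition Q1 Q2 Q3)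
    (h : Omega3 P1 P2 P3 = Omega3 Q1 Q2 Q3) :
    ({P1, P2, P3} : Set (Set (Fin k))) = {Q1, Q2, Q3} := by
  have hcl : cl P1 P2 P3 = cl Q1 Q2 Q3 := by
    funext i; ext j; exact same_iff_of_omega_eq hP hQ h i j
  rw [← range_cl hP, ← range_cl hQ, hcl]

end Helpers
section PMC

variable {k : ℕ}

lemma gk_adj_inl_inr {i : Fin k} {S : {S : Finset (Fin k) // S.card = 2}} :
    (Gk k).Adj (Sum.inl i) (Sum.inr S) ↔ i ∈ S.val := Iff.rfl

lemma gk_adj_inr_inl {i : Fin k} {S : {S : Finset (Fin k) // S.card = 2}} :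
    (Gk k).Adj (Sum.inr S) (Sum.inl i) ↔ i ∈ S.val := Iff.rfl

lemma gk_adj_inl_inl {i j : Fin k} :
    ¬ (Gk k).Adj (Sum.inl i) (Sum.inl j) := fun h => h

lemma gk_adj_inr_inr {S T : {S : Finset (Fin k) // S.card = 2}} :
    ¬ (Gk k).Adj (Sum.inr S) (Sum.inr T) := fun h => h

lemma mem_Omega3_iff' {P1 P2 P3 : Set (Fin k)} {S : {S : Finset (Fin k) // S.card = 2}} :
    Sum.inr S ∈ Omega3 P1 P2 P3 ↔
      ∃ i ∈ S.val, ∃ j ∈ S.val, i ≠ j ∧ ¬ same P1 P2 P3 i j := by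
  constructor
  · rintro ⟨T, hT, h⟩
    obtain rfl : T = S := by cases hT; rfl
    exact h
  · intro h; exact ⟨S, rfl, h⟩

lemma same_of_not_mem {P1 P2 P3 : Set (Fin k)} {S : {S : Finset (Fin k) // S.card = 2}}
    (hS : Sum.inr S ∉ Omega3 P1 P2 P3) {i j : Fin k} (hi : i ∈ S.val) (hj : j ∈ S.val)
    (hij : i ≠ j) : same P1 P2 P3 i j := by
  by_contra h
  exact hS (mem_Omega3_iff'.mpr ⟨i, hi, j, hj, hij, h⟩)

lemma same_mem {P1 P2 P3 P : Set (Fin k)} (hT : IsTripartition P1 P2 P3)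
    (hP : P = P1 ∨ P = P2 ∨ P = P3) {i j : Fin k} (hs : same P1 P2 P3 i j)
    (hi : i ∈ P) : j ∈ P := by
  obtain ⟨-, -, -, h12, h13, h23, -⟩ := id hT
  have e12 : i ∈ P1 → i ∉ P2 := fun h => Set.disjoint_left.mp h12 h
  have e13 : i ∈ P1 → i ∉ P3 := fun h => Set.disjoint_left.mp h13 h
  have e23 : i ∈ P2 → i ∉ P3 := fun h => Set.disjoint_left.mp h23 h
  unfold same at hs
  rcases hP with rfl | rfl | rfl <;> tauto

lemma same_of_mem {P1 P2 P3 P : Set (Fin k)}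
    (hP : P = P1 ∨ P = P2 ∨ P = P3) {i j : Fin k} (hi : i ∈ P) (hj : j ∈ P) :
    same P1 P2 P3 i j := by
  unfold same; rcases hP with rfl | rfl | rfl <;> tauto

/-- the vertices of `G_k` living inside a part `P` -/
def inPart {k : ℕ} (P : Set (Fin k)) : GkV k → Prop
  | .inl i => i ∈ P
  | .inr S => ∀ i ∈ S.val, i ∈ P

lemma inPart_closed {P1 P2 P3 P : Set (Fin k)} (hT : IsTripartition P1 P2 P3)
    (hP : P = P1 ∨ P = P2 ∨ P = P3) {a b : GkV k}
    (hAdj : (restrict (Gk k) (Omega3 P1 P2 P3)).Adj a b)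
    (ha : inPart P a) : inPart P b := by
  obtain ⟨hadj, -, hbΩ⟩ := hAdj
  match a, b with
  | Sum.inl i, Sum.inl j => exact absurd hadj gk_adj_inl_inl
  | Sum.inr S, Sum.inr T => exact absurd hadj gk_adj_inr_inr
  | Sum.inr S, Sum.inl j => exact ha j (gk_adj_inr_inl.mpr (gk_adj_inr_inl.mp hadj))
  | Sum.inl i, Sum.inr S =>
    have hiS : i ∈ S.val := hadj
    intro m hm
    rcases eq_or_ne m i with rfl | hmi
    · exact ha
    · exact same_mem hT hP (same_of_not_mem hbΩ hiS hm hmi.symm) ha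

lemma inPart_walk {P1 P2 P3 P : Set (Fin k)} (hT : IsTripartition P1 P2 P3)
    (hP : P = P1 ∨ P = P2 ∨ P = P3) {a b : GkV k}
    (w : (restrict (Gk k) (Omega3 P1 P2 P3)).Walk a b) :
    inPart P a → inPart P b := by
  induction w with
  | nil => exact id
  | cons h _ ih => exact fun ha => ih (inPart_closed hT hP h ha)

lemma inPart_reach {P1 P2 P3 P : Set (Fin k)} (hT : IsTripartition P1 P2 P3)
    (hP : P = P1 ∨ P = P2 ∨ P = P3) {a b : GkV k}
    (hr : (restrict (Gk k) (Omega3 P1 P2 P3)).Reachable a b)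
    (ha : inPart P a) : inPart P b := by
  obtain ⟨w⟩ := hr
  exact inPart_walk hT hP w ha

lemma reach_inl {P1 P2 P3 P : Set (Fin k)} (hT : IsTripartition P1 P2 P3)
    (hP : P = P1 ∨ P = P2 ∨ P = P3) {i j : Fin k} (hi : i ∈ P) (hj : j ∈ P) :
    (restrict (Gk k) (Omega3 P1 P2 P3)).Reachable (Sum.inl i) (Sum.inl j) := by
  rcases eq_or_ne i j with rfl | hij
  · exact SimpleGraph.Reachable.refl _
  · set S : {S : Finset (Fin k) // S.card = 2} := ⟨{i, j}, Finset.card_pair hij⟩ with hSdef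
    have hiS : i ∈ S.val := by simp [hSdef]
    have hjS : j ∈ S.val := by simp [hSdef]
    have hSΩ : Sum.inr S ∉ Omega3 P1 P2 P3 := by
      rw [mem_Omega3_iff hij S rfl, not_not]
      exact same_of_mem hP hi hj
    have h1 : (restrict (Gk k) (Omega3 P1 P2 P3)).Adj (Sum.inl i) (Sum.inr S) :=
      ⟨gk_adj_inl_inr.mpr hiS, inl_not_mem_Omega3 i, hSΩ⟩
    have h2 : (restrict (Gk k) (Omega3 P1 P2 P3)).Adj (Sum.inr S) (Sum.inl j) :=
      ⟨gk_adj_inr_inl.mpr hjS, hSΩ, inl_not_mem_Omega3 j⟩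
    exact h1.reachable.trans h2.reachable

lemma exists_part {P1 P2 P3 : Set (Fin k)} (hT : IsTripartition P1 P2 P3) {a : GkV k}
    (ha : a ∉ Omega3 P1 P2 P3) :
    ∃ P, (P = P1 ∨ P = P2 ∨ P = P3) ∧ inPart P a := by
  match a with
  | Sum.inl i =>
    rcases mem_cover hT i with h | h | h
    exacts [⟨P1, Or.inl rfl, h⟩, ⟨P2, Or.inr (Or.inl rfl), h⟩, ⟨P3, Or.inr (Or.inr rfl), h⟩]
  | Sum.inr S =>
    obtain ⟨i, hiS⟩ := Finset.card_pos.mp (by rw [S.prop]; norm_num : 0 < S.val.card)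
    obtain ⟨P, hP, hiP⟩ : ∃ P, (P = P1 ∨ P = P2 ∨ P = P3) ∧ i ∈ P := by
      rcases mem_cover hT i with h | h | h
      exacts [⟨P1, Or.inl rfl, h⟩, ⟨P2, Or.inr (Or.inl rfl), h⟩, ⟨P3, Or.inr (Or.inr rfl), h⟩]
    refine ⟨P, hP, fun m hm => ?_⟩
    rcases eq_or_ne m i with rfl | hmi
    · exact hiP
    · exact same_mem hT hP (same_of_not_mem ha hiS hm hmi.symm) hiP

lemma other_parts {P1 P2 P3 P : Set (Fin k)} (hT : IsTripartition P1 P2 P3)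
    (hP : P = P1 ∨ P = P2 ∨ P = P3) :
    ∃ p q, p ≠ q ∧ ¬ same P1 P2 P3 p q ∧ p ∉ P ∧ q ∉ P := by
  obtain ⟨h1, h2, h3, h12, h13, h23, -⟩ := id hT
  have d12 := Set.disjoint_left.mp h12
  have d13 := Set.disjoint_left.mp h13
  have d23 := Set.disjoint_left.mp h23
  obtain ⟨p1, hp1⟩ := h1; obtain ⟨p2, hp2⟩ := h2; obtain ⟨p3, hp3⟩ := h3
  rcases hP with rfl | rfl | rfl
  · refine ⟨p2, p3, ?_, ?_, fun h => d12 h hp2, fun h => d13 h hp3⟩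
    · rintro rfl; exact d23 hp2 hp3
    · rintro (⟨ha, hb⟩ | ⟨ha, hb⟩ | ⟨ha, hb⟩)
      exacts [d12 ha hp2, d23 hb hp3, d23 hp2 ha]
  · refine ⟨p1, p3, ?_, ?_, fun h => d12 hp1 h, fun h => d23 h hp3⟩
    · rintro rfl; exact d13 hp1 hp3
    · rintro (⟨ha, hb⟩ | ⟨ha, hb⟩ | ⟨ha, hb⟩)
      exacts [d13 hb hp3, d12 hp1 ha, d13 hp1 ha]
  · refine ⟨p1, p2, ?_, ?_, fun h => d13 hp1 h, fun h => d23 hp2 h⟩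
    · rintro rfl; exact d12 hp1 hp2
    · rintro (⟨ha, hb⟩ | ⟨ha, hb⟩ | ⟨ha, hb⟩)
      exacts [d12 hb hp2, d12 hp1 ha, d13 hp1 ha]

set_option maxHeartbeats 1000000 in
lemma prop_common (a1 a2 a3 b1 b2 b3 c1 c2 c3 d1 d2 d3 : Prop)
    (hi : a1∨a2∨a3) (hj : b1∨b2∨b3) (hi' : c1∨c2∨c3) (hj' : d1∨d2∨d3)
    (hij : ¬((a1∧b1)∨(a2∧b2)∨(a3∧b3))) (hij' : ¬((c1∧d1)∨(c2∧d2)∨(c3∧d3))) :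
    ((a1∨b1)∧(c1∨d1)) ∨ ((a2∨b2)∧(c2∨d2)) ∨ ((a3∨b3)∧(c3∨d3)) := by
  push_neg at hij hij'
  obtain ⟨n1, n2, n3⟩ := hij
  obtain ⟨m1, m2, m3⟩ := hij'
  rcases hi with a|a|a <;> rcases hi' with c|c|c <;> rcases hj with b|b|b <;>
    rcases hj' with d|d|d <;> itauto

lemma common_part {P1 P2 P3 : Set (Fin k)} (hT : IsTripartition P1 P2 P3)
    {i j i' j' : Fin k} (hij : ¬ same P1 P2 P3 i j) (hij' : ¬ same P1 P2 P3 i' j') :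
    ∃ P, (P = P1 ∨ P = P2 ∨ P = P3) ∧ (i ∈ P ∨ j ∈ P) ∧ (i' ∈ P ∨ j' ∈ P) := by
  have hi := mem_cover hT i
  have hj := mem_cover hT j
  have hi' := mem_cover hT i'
  have hj' := mem_cover hT j'
  unfold same at hij hij'
  suffices h : ((i ∈ P1 ∨ j ∈ P1) ∧ (i' ∈ P1 ∨ j' ∈ P1)) ∨
      ((i ∈ P2 ∨ j ∈ P2) ∧ (i' ∈ P2 ∨ j' ∈ P2)) ∨
      ((i ∈ P3 ∨ j ∈ P3) ∧ (i' ∈ P3 ∨ j' ∈ P3)) by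
    rcases h with ⟨ha, hb⟩ | ⟨ha, hb⟩ | ⟨ha, hb⟩
    exacts [⟨P1, Or.inl rfl, ha, hb⟩, ⟨P2, Or.inr (Or.inl rfl), ha, hb⟩,
      ⟨P3, Or.inr (Or.inr rfl), ha, hb⟩]
  exact prop_common _ _ _ _ _ _ _ _ _ _ _ _ hi hj hi' hj' hij hij'

lemma isPMC_omega3 {P1 P2 P3 : Set (Fin k)} (hT : IsTripartition P1 P2 P3) :
    IsPMC (Gk k) (Omega3 P1 P2 P3) := by
  constructor
  · rintro C ⟨a, haΩ, rfl⟩ hno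
    obtain ⟨P, hP, hpa⟩ := exists_part hT haΩ
    obtain ⟨p, q, hpq, hnsame, hpP, hqP⟩ := other_parts hT hP
    set S : {S : Finset (Fin k) // S.card = 2} := ⟨{p, q}, Finset.card_pair hpq⟩ with hSdef
    have hwΩ : Sum.inr S ∈ Omega3 P1 P2 P3 := (mem_Omega3_iff hpq S rfl).mpr hnsame
    rw [← hno] at hwΩ
    obtain ⟨-, c, ⟨hcΩ, hcr⟩, hAdj⟩ := hwΩ
    have hc : inPart P c := inPart_reach hT hP hcr hpa
    match c with
    | Sum.inl m =>
      have hmS : m ∈ S.val := gk_adj_inr_inl.mp hAdj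
      have : m = p ∨ m = q := by
        simpa [hSdef, Finset.mem_insert, Finset.mem_singleton] using hmS
      rcases this with rfl | rfl
      · exact hpP hc
      · exact hqP hc
    | Sum.inr T => exact gk_adj_inr_inr hAdj
  · intro u hu v hv huv
    right
    have hu' := hu
    have hv' := hv
    obtain ⟨S, rfl, i, hiS, j, hjS, hij, hnsame⟩ := hu
    obtain ⟨T, rfl, i', hiT, j', hjT, hij', hnsame'⟩ := hv
    obtain ⟨P, hP, hm, hm'⟩ := common_part hT hnsame hnsame'
    obtain ⟨m, hmS, hmP⟩ : ∃ m, m ∈ S.val ∧ m ∈ P := by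
      rcases hm with h | h
      exacts [⟨i, hiS, h⟩, ⟨j, hjS, h⟩]
    obtain ⟨m', hmT, hmP'⟩ : ∃ m', m' ∈ T.val ∧ m' ∈ P := by
      rcases hm' with h | h
      exacts [⟨i', hiT, h⟩, ⟨j', hjT, h⟩]
    refine ⟨{b | b ∉ Omega3 P1 P2 P3 ∧ (restrict (Gk k) (Omega3 P1 P2 P3)).Reachable (Sum.inl m) b},
      ⟨Sum.inl m, inl_not_mem_Omega3 m, rfl⟩, ?_, ?_⟩
    · exact ⟨fun hc => hc.1 hu', Sum.inl m,
        ⟨inl_not_mem_Omega3 m, SimpleGraph.Reachable.refl _⟩, gk_adj_inr_inl.mpr hmS⟩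
    · exact ⟨fun hc => hc.1 hv', Sum.inl m',
        ⟨inl_not_mem_Omega3 m', reach_inl hT hP hmP hmP'⟩, gk_adj_inr_inl.mpr hmT⟩

end PMC
section RGS

/-- restricted growth strings with `j` values -/
def RGS (n j : ℕ) (f : Fin n → Fin j) : Prop :=
  Function.Surjective f ∧ ∀ (i : Fin n) (w : Fin j), w < f i → ∃ i', i' < i ∧ f i' = w

lemma rgsA {n j : ℕ} {g : Fin n → Fin (j + 1)} (hg : RGS n (j + 1) g) (v : Fin (j + 1)) :
    RGS (n + 1) (j + 1) (Fin.snoc g v) := by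
  obtain ⟨hsurj, hcond⟩ := hg
  constructor
  · intro b
    obtain ⟨i0, hi0⟩ := hsurj b
    exact ⟨Fin.castSucc i0, by rw [Fin.snoc_castSucc]; exact hi0⟩
  · intro i w hw
    induction i using Fin.lastCases with
    | last =>
      rw [Fin.snoc_last] at hw
      obtain ⟨i0, hi0⟩ := hsurj w
      exact ⟨Fin.castSucc i0, Fin.castSucc_lt_last i0, by rw [Fin.snoc_castSucc, hi0]⟩
    | cast i0 =>
      rw [Fin.snoc_castSucc] at hw
      obtain ⟨i', hi', hfi'⟩ := hcond i0 w hw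
      exact ⟨Fin.castSucc i', Fin.castSucc_lt_castSucc_iff.mpr hi',
        by rw [Fin.snoc_castSucc, hfi']⟩

lemma rgsB {n j : ℕ} {g : Fin n → Fin j} (hg : RGS n j g) :
    RGS (n + 1) (j + 1) (Fin.snoc (Fin.castSucc ∘ g) (Fin.last j)) := by
  obtain ⟨hsurj, hcond⟩ := hg
  constructor
  · intro b
    induction b using Fin.lastCases with
    | last => exact ⟨Fin.last n, by rw [Fin.snoc_last]⟩
    | cast b0 =>
      obtain ⟨i0, hi0⟩ := hsurj b0
      exact ⟨Fin.castSucc i0, by rw [Fin.snoc_castSucc]; simp [hi0]⟩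
  · intro i w hw
    induction i using Fin.lastCases with
    | last =>
      rw [Fin.snoc_last] at hw
      obtain ⟨w0, rfl⟩ := Fin.exists_castSucc_eq.mpr hw.ne
      obtain ⟨i0, hi0⟩ := hsurj w0
      exact ⟨Fin.castSucc i0, Fin.castSucc_lt_last i0, by rw [Fin.snoc_castSucc]; simp [hi0]⟩
    | cast i0 =>
      rw [Fin.snoc_castSucc] at hw
      have hne : w ≠ Fin.last j :=
        Fin.ne_last_of_lt (lt_of_lt_of_le hw (Fin.castSucc_lt_last _).le)
      obtain ⟨w0, rfl⟩ := Fin.exists_castSucc_eq.mpr hne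
      have hww : w0 < g i0 := by
        rw [Function.comp_apply] at hw
        exact Fin.castSucc_lt_castSucc_iff.mp hw
      obtain ⟨i', hi', hfi'⟩ := hcond i0 w0 hww
      exact ⟨Fin.castSucc i', Fin.castSucc_lt_castSucc_iff.mpr hi',
        by rw [Fin.snoc_castSucc]; simp [hfi']⟩

def Phi (n j : ℕ) :
    (Fin (j + 1) × {g : Fin n → Fin (j + 1) // RGS n (j + 1) g}) ⊕
      {g : Fin n → Fin j // RGS n j g} →
      {f : Fin (n + 1) → Fin (j + 1) // RGS (n + 1) (j + 1) f}
  | .inl (v, ⟨g, hg⟩) => ⟨Fin.snoc g v, rgsA hg v⟩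
  | .inr ⟨g, hg⟩ => ⟨Fin.snoc (Fin.castSucc ∘ g) (Fin.last j), rgsB hg⟩

lemma Phi_injective (n j : ℕ) : Function.Injective (Phi n j) := by
  rintro (⟨v, g, hg⟩ | ⟨g, hg⟩) (⟨v', g', hg'⟩ | ⟨g', hg'⟩) h <;>
    simp only [Phi, Subtype.mk.injEq] at h
  · have hv : v = v' := by
      have := congrFun h (Fin.last n); simpa using this
    have hgg : g = g' := funext fun i => by
      have := congrFun h (Fin.castSucc i); simpa using this
    simp [hv, hgg]
  · exfalso
    obtain ⟨i0, hi0⟩ := hg.1 (Fin.last j)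
    have := congrFun h (Fin.castSucc i0)
    rw [Fin.snoc_castSucc, Fin.snoc_castSucc, hi0, Function.comp_apply] at this
    exact (Fin.castSucc_lt_last (g' i0)).ne' this
  · exfalso
    obtain ⟨i0, hi0⟩ := hg'.1 (Fin.last j)
    have := congrFun h (Fin.castSucc i0)
    rw [Fin.snoc_castSucc, Fin.snoc_castSucc, hi0, Function.comp_apply] at this
    exact (Fin.castSucc_lt_last (g i0)).ne this
  · have hgg : g = g' := by
      funext i
      have := congrFun h (Fin.castSucc i)
      rw [Fin.snoc_castSucc, Fin.snoc_castSucc] at this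
      exact Fin.castSucc_injective _ this
    simp [hgg]

lemma stirling_le_card : ∀ n j : ℕ, stirling n j ≤ Nat.card {f : Fin n → Fin j // RGS n j f}
  | 0, 0 => by
    have hne : Nonempty {f : Fin 0 → Fin 0 // RGS 0 0 f} :=
      ⟨⟨Fin.elim0, fun b => b.elim0, fun i => i.elim0⟩⟩
    rw [stirling]
    exact Nat.one_le_iff_ne_zero.mpr (Nat.card_ne_zero.mpr ⟨hne, inferInstance⟩)
  | 0, j + 1 => by rw [stirling]; exact Nat.zero_le _
  | n + 1, 0 => by rw [stirling]; exact Nat.zero_le _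
  | n + 1, j + 1 => by
    have h1 := stirling_le_card n (j + 1)
    have h2 := stirling_le_card n j
    have hΦ := Nat.card_le_card_of_injective _ (Phi_injective n j)
    rw [Nat.card_sum, Nat.card_prod, Nat.card_eq_fintype_card (α := Fin (j + 1)),
      Fintype.card_fin] at hΦ
    rw [stirling]
    calc (j + 1) * stirling n (j + 1) + stirling n j
        ≤ (j + 1) * Nat.card {g : Fin n → Fin (j+1) // RGS n (j+1) g} +
            Nat.card {g : Fin n → Fin j // RGS n j g} :=
          Nat.add_le_add (Nat.mul_le_mul_left _ h1) h2
      _ ≤ _ := hΦ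

lemma rgs_canonical {n j : ℕ} {f g : Fin n → Fin j} (hf : RGS n j f) (hg : RGS n j g)
    (h : ∀ i i', f i = f i' ↔ g i = g i') : f = g := by
  funext i
  suffices h' : ∀ m : ℕ, ∀ i : Fin n, i.val = m → f i = g i from h' i.val i rfl
  intro m
  induction m using Nat.strong_induction_on with
  | _ m ihm =>
    rintro i rfl
    have ih : ∀ i', i' < i → f i' = g i' := fun i' hlt => ihm i'.val hlt i' rfl
    by_cases hx : ∃ i', i' < i ∧ f i' = f i
    · obtain ⟨i', hlt, he⟩ := hx
      have hgi : g i' = g i := (h i' i).mp he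
      rw [← hgi, ← ih i' hlt, he]
    · push_neg at hx
      rcases lt_trichotomy (f i) (g i) with hlt | heq | hgt
      · obtain ⟨i', hi', he⟩ := hg.2 i (f i) hlt
        exact absurd ((ih i' hi').trans he) (hx i' hi')
      · exact heq
      · obtain ⟨i', hi', he⟩ := hf.2 i (g i) hgt
        have hgi : g i' = g i := by rw [← ih i' hi', he]
        exact absurd ((h i' i).mpr hgi) (hx i' hi')

end RGS

section Final

variable {k : ℕ}

lemma fin3_cases (v : Fin 3) : v = 0 ∨ v = 1 ∨ v = 2 := by fin_cases v <;> simp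

lemma trip_of_rgs {f : Fin k → Fin 3} (hf : RGS k 3 f) :
    IsTripartition (f ⁻¹' {0}) (f ⁻¹' {1}) (f ⁻¹' {2}) := by
  obtain ⟨hsurj, -⟩ := hf
  obtain ⟨a0, h0⟩ := hsurj 0
  obtain ⟨a1, h1⟩ := hsurj 1
  obtain ⟨a2, h2⟩ := hsurj 2
  refine ⟨⟨a0, h0⟩, ⟨a1, h1⟩, ⟨a2, h2⟩, ?_, ?_, ?_, ?_⟩
  · rw [Set.disjoint_left]
    intro a ha hb
    rw [Set.mem_preimage, Set.mem_singleton_iff] at ha hb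
    rw [ha] at hb; exact absurd hb (by decide)
  · rw [Set.disjoint_left]
    intro a ha hb
    rw [Set.mem_preimage, Set.mem_singleton_iff] at ha hb
    rw [ha] at hb; exact absurd hb (by decide)
  · rw [Set.disjoint_left]
    intro a ha hb
    rw [Set.mem_preimage, Set.mem_singleton_iff] at ha hb
    rw [ha] at hb; exact absurd hb (by decide)
  · rw [Set.eq_univ_iff_forall]
    intro i
    simp only [Set.mem_union, Set.mem_preimage, Set.mem_singleton_iff]
    have := fin3_cases (f i)
    tauto

lemma same_fiber {f : Fin k → Fin 3} (i j : Fin k) :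
    same (f ⁻¹' {0}) (f ⁻¹' {1}) (f ⁻¹' {2}) i j ↔ f i = f j := by
  simp only [same, Set.mem_preimage, Set.mem_singleton_iff]
  constructor
  · rintro (⟨h1, h2⟩ | ⟨h1, h2⟩ | ⟨h1, h2⟩) <;> rw [h1, h2]
  · intro h
    rcases fin3_cases (f i) with h0 | h0 | h0
    · exact Or.inl ⟨h0, by rw [← h, h0]⟩
    · exact Or.inr (Or.inl ⟨h0, by rw [← h, h0]⟩)
    · exact Or.inr (Or.inr ⟨h0, by rw [← h, h0]⟩)

end Final

theorem stmt7 (k : ℕ) :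
    (∀ P1 P2 P3 Q1 Q2 Q3 : Set (Fin k), IsTripartition P1 P2 P3 → IsTripartition Q1 Q2 Q3 →
      Omega3 P1 P2 P3 = Omega3 Q1 Q2 Q3 →
      ({P1, P2, P3} : Set (Set (Fin k))) = {Q1, Q2, Q3}) ∧
    stirling k 3 ≤ {Ω : Set (GkV k) | IsPMC (Gk k) Ω ∧ ∀ i : Fin k, Sum.inl i ∉ Ω}.ncard := by
  constructor
  · exact fun P1 P2 P3 Q1 Q2 Q3 hP hQ h => triple_eq_of_omega_eq hP hQ h
  · set M := {Ω : Set (GkV k) | IsPMC (Gk k) Ω ∧ ∀ i : Fin k, Sum.inl i ∉ Ω} with hM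
    have hΨmem : ∀ f : {f : Fin k → Fin 3 // RGS k 3 f},
        Omega3 (f.val ⁻¹' {0}) (f.val ⁻¹' {1}) (f.val ⁻¹' {2}) ∈ M := by
      intro f
      exact ⟨isPMC_omega3 (trip_of_rgs f.2), fun i => inl_not_mem_Omega3 i⟩
    set Ψ : {f : Fin k → Fin 3 // RGS k 3 f} → M := fun f => ⟨_, hΨmem f⟩ with hΨ
    have hinj : Function.Injective Ψ := by
      rintro ⟨f, hf⟩ ⟨g, hg⟩ h
      have h2 : Omega3 (f ⁻¹' {0}) (f ⁻¹' {1}) (f ⁻¹' {2}) =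
          Omega3 (g ⁻¹' {0}) (g ⁻¹' {1}) (g ⁻¹' {2}) := congrArg Subtype.val h
      have hsame := same_iff_of_omega_eq (trip_of_rgs hf) (trip_of_rgs hg) h2
      have hrel : ∀ i i', f i = f i' ↔ g i = g i' := fun i i' => by
        rw [← same_fiber i i', ← same_fiber i i']
        exact hsame i i'
      exact Subtype.ext (rgs_canonical hf hg hrel)
    calc stirling k 3 ≤ Nat.card {f : Fin k → Fin 3 // RGS k 3 f} := stirling_le_card k 3
      _ ≤ Nat.card M := Nat.card_le_card_of_injective Ψ hinj
      _ = M.ncard := Nat.card_coe_set_eq M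
end

section
/- For every 0 ≤ i ≤ k, the graph G_k has at least S(k−i, 3) free potential maximal cliques Ω with Ω ∩ [k] = [i], where S denotes Stirling numbers of the second kind. -/
def Flist : ℕ → ℕ → Finset (List ℕ)
  | 0, 0 => {[]}
  | 0, _ + 1 => ∅
  | _ + 1, 0 => ∅
  | n + 1, j + 1 =>
      ((Finset.range (j+1)).biUnion fun a => (Flist n (j+1)).image (a :: ·)) ∪
        (Flist n j).image (j :: ·)

lemma mem_Flist_succ {n j : ℕ} {l : List ℕ} :
    l ∈ Flist (n+1) (j+1) ↔
      (∃ a < j + 1, ∃ t ∈ Flist n (j+1), a :: t = l) ∨ ∃ t ∈ Flist n j, j :: t = l := by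
  simp [Flist, Finset.mem_biUnion, Finset.mem_image]

lemma Flist_length : ∀ {n j : ℕ} {l : List ℕ}, l ∈ Flist n j → l.length = n := by
  intro n
  induction n with
  | zero => rintro (_|j) l hl <;> simp [Flist] at hl <;> simp [hl]
  | succ n ih =>
    rintro (_|j) l hl
    · simp [Flist] at hl
    · rcases mem_Flist_succ.mp hl with ⟨a, _, t, ht, rfl⟩ | ⟨t, ht, rfl⟩ <;>
        simp [ih ht]

lemma Flist_values : ∀ {n j : ℕ} {l : List ℕ}, l ∈ Flist n j →
    (∀ x ∈ l, x < j) ∧ (∀ x < j, x ∈ l) := by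
  intro n
  induction n with
  | zero =>
    rintro (_|j) l hl <;> simp [Flist] at hl
    subst hl; simp
  | succ n ih =>
    rintro (_|j) l hl
    · simp [Flist] at hl
    · rcases mem_Flist_succ.mp hl with ⟨a, ha, t, ht, rfl⟩ | ⟨t, ht, rfl⟩
      · obtain ⟨h1, h2⟩ := ih ht
        refine ⟨?_, ?_⟩
        · intro x hx; rcases List.mem_cons.mp hx with rfl | hx
          · exact ha
          · exact h1 x hx
        · intro x hx; exact List.mem_cons.mpr (Or.inr (h2 x hx))
      · obtain ⟨h1, h2⟩ := ih ht
        refine ⟨?_, ?_⟩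
        · intro x hx; rcases List.mem_cons.mp hx with rfl | hx
          · omega
          · exact Nat.lt_succ_of_lt (h1 x hx)
        · intro x hx
          rcases Nat.lt_succ_iff_lt_or_eq.mp hx with h | rfl
          · exact List.mem_cons.mpr (Or.inr (h2 x h))
          · exact List.mem_cons.mpr (Or.inl rfl)

lemma Flist_card : ∀ (n j : ℕ), (Flist n j).card = stirling n j := by
  intro n
  induction n with
  | zero => rintro (_|j) <;> simp [Flist, stirling]
  | succ n ih =>
    rintro (_|j)
    · simp [Flist, stirling]
    · rw [show Flist (n+1) (j+1) = ((Finset.range (j+1)).biUnion fun a => (Flist n (j+1)).image (a :: ·)) ∪ (Flist n j).image (j :: ·) from rfl]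
      rw [Finset.card_union_of_disjoint, Finset.card_biUnion]
      · simp only [Finset.card_image_of_injective _ (List.cons_injective), Finset.sum_const,
          Finset.card_range, smul_eq_mul]
        rw [ih, ih]; rfl
      · intro a _ b _ hab
        simp only [Finset.disjoint_left, Finset.mem_image]
        rintro l ⟨t, _, rfl⟩ ⟨t', _, h⟩
        exact hab (List.cons.injEq .. ▸ h).1.symm
      · simp only [Finset.disjoint_left, Finset.mem_biUnion, Finset.mem_image]
        rintro l ⟨a, _, t, ht, rfl⟩ ⟨t', ht', h⟩
        obtain ⟨rfl, rfl⟩ := List.cons.injEq .. ▸ h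
        have := (Flist_values ht').1 _ ((Flist_values ht).2 j (Nat.lt_succ_self j))
        omega

lemma getD_of_mem {t : List ℕ} {a : ℕ} (h : a ∈ t) : ∃ p < t.length, t.getD p 0 = a := by
  obtain ⟨p, hp, hpa⟩ := List.mem_iff_getElem.mp h
  exact ⟨p, hp, by rw [List.getD_eq_getElem _ _ hp]; exact hpa⟩

lemma getD_mem {t : List ℕ} {p : ℕ} (h : p < t.length) : t.getD p 0 ∈ t := by
  rw [List.getD_eq_getElem _ _ h]; exact List.getElem_mem h

lemma getD_cons_zero' (a : ℕ) (t : List ℕ) : (a::t).getD 0 0 = a := rfl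
lemma getD_cons_succ' (a p : ℕ) (t : List ℕ) : (a::t).getD (p+1) 0 = t.getD p 0 := rfl

lemma Flist_inj : ∀ {n j j' : ℕ} {l l' : List ℕ}, l ∈ Flist n j → l' ∈ Flist n j' →
    (∀ p q, p < n → q < n → (l.getD p 0 = l.getD q 0 ↔ l'.getD p 0 = l'.getD q 0)) →
    l = l' ∧ j = j' := by
  intro n
  induction n with
  | zero =>
    rintro (_|j) (_|j') l l' hl hl' _ <;> simp [Flist] at hl hl' <;> simp [hl, hl']
  | succ n ih =>
    rintro (_|j) (_|j') l l' hl hl' hrel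
    · simp [Flist] at hl
    · simp [Flist] at hl
    · simp [Flist] at hl'
    have tailrel : ∀ (a a' : ℕ) (t t' : List ℕ), a :: t = l → a' :: t' = l' →
        ∀ p q, p < n → q < n → (t.getD p 0 = t.getD q 0 ↔ t'.getD p 0 = t'.getD q 0) := by
      rintro a a' t t' rfl rfl p q hp hq
      have := hrel (p+1) (q+1) (by omega) (by omega)
      rwa [getD_cons_succ', getD_cons_succ', getD_cons_succ', getD_cons_succ'] at this
    rcases mem_Flist_succ.mp hl with ⟨a, ha, t, ht, hlt⟩ | ⟨t, ht, hlt⟩ <;>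
      rcases mem_Flist_succ.mp hl' with ⟨a', ha', t', ht', hlt'⟩ | ⟨t', ht', hlt'⟩
    · obtain ⟨rfl, hj⟩ := ih ht ht' (tailrel a a' t t' hlt hlt')
      have hmem : a ∈ t := (Flist_values ht).2 a ha
      obtain ⟨p, hp, hpa⟩ := getD_of_mem hmem
      rw [Flist_length ht] at hp
      have h2 := (hrel 0 (p+1) (by omega) (by omega)).mp
        (by rw [← hlt, getD_cons_zero', getD_cons_succ', hpa])
      rw [← hlt', getD_cons_zero', getD_cons_succ', hpa] at h2
      subst h2
      exact ⟨by rw [← hlt, ← hlt'], by omega⟩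
    · obtain ⟨rfl, hj⟩ := ih ht ht' (tailrel a j' t t' hlt hlt')
      have hmem : a ∈ t := (Flist_values ht).2 a ha
      obtain ⟨p, hp, hpa⟩ := getD_of_mem hmem
      rw [Flist_length ht] at hp
      have h2 := (hrel 0 (p+1) (by omega) (by omega)).mp
        (by rw [← hlt, getD_cons_zero', getD_cons_succ', hpa])
      rw [← hlt', getD_cons_zero', getD_cons_succ', hpa] at h2
      have h3 := (Flist_values ht').1 _ hmem
      omega
    · obtain ⟨rfl, hj⟩ := ih ht ht' (tailrel j a' t t' hlt hlt')
      have hmem : a' ∈ t := (Flist_values ht').2 a' ha'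
      obtain ⟨p, hp, hpa⟩ := getD_of_mem hmem
      rw [Flist_length ht'] at hp
      have h2 := (hrel 0 (p+1) (by omega) (by omega)).mpr
        (by rw [← hlt', getD_cons_zero', getD_cons_succ', hpa])
      rw [← hlt, getD_cons_zero', getD_cons_succ', hpa] at h2
      have h3 := (Flist_values ht).1 _ hmem
      omega
    · obtain ⟨rfl, hj⟩ := ih ht ht' (tailrel j j' t t' hlt hlt')
      subst hj
      exact ⟨by rw [← hlt, ← hlt'], rfl⟩

section OmSec

variable {k : ℕ} (i : ℕ) (c : Fin k → ℕ)

/-- The candidate PMC. -/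
def Om : Set (GkV k) :=
  {v | match v with
    | .inl j => (j : ℕ) < i
    | .inr S => (∀ x ∈ S.val, i ≤ (x : ℕ)) ∧ ∃ x ∈ S.val, ∃ y ∈ S.val, c x ≠ c y}

lemma adj_inl_inr {k : ℕ} {j : Fin k} {S : {S : Finset (Fin k) // S.card = 2}} :
    (Gk k).Adj (Sum.inl j) (Sum.inr S) ↔ j ∈ S.val := Iff.rfl

lemma adj_inr_inl {k : ℕ} {j : Fin k} {S : {S : Finset (Fin k) // S.card = 2}} :
    (Gk k).Adj (Sum.inr S) (Sum.inl j) ↔ j ∈ S.val := Iff.rfl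

lemma not_adj_inl_inl {k : ℕ} {j j' : Fin k} : ¬ (Gk k).Adj (Sum.inl j) (Sum.inl j') :=
  fun h => h

lemma not_adj_inr_inr {k : ℕ} {S T : {S : Finset (Fin k) // S.card = 2}} :
    ¬ (Gk k).Adj (Sum.inr S) (Sum.inr T) := fun h => h

lemma mem_Om_inl {j : Fin k} : Sum.inl j ∈ Om i c ↔ (j : ℕ) < i := Iff.rfl

lemma mem_Om_inr {S : {S : Finset (Fin k) // S.card = 2}} :
    Sum.inr S ∈ Om i c ↔ (∀ x ∈ S.val, i ≤ (x : ℕ)) ∧ ∃ x ∈ S.val, ∃ y ∈ S.val, c x ≠ c y :=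
  Iff.rfl

/-- invariant for components -/
def Qinv (m : ℕ) : GkV k → Prop
  | .inl y => i ≤ (y : ℕ) ∧ c y = m
  | .inr S => ∀ y ∈ S.val, i ≤ (y : ℕ) → c y = m

/-- the two elements of a card-2 Finset containing y and z (distinct) are exactly y, z -/
lemma pair_eq {S : Finset (Fin k)} (hS : S.card = 2) {y z : Fin k} (hy : y ∈ S)
    (hz : z ∈ S) (hyz : y ≠ z) : ∀ x ∈ S, x = y ∨ x = z := by
  intro x hx
  by_contra hcon
  push_neg at hcon
  have : ({y, z, x} : Finset (Fin k)) ⊆ S := by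
    intro w hw; simp at hw; rcases hw with rfl|rfl|rfl <;> assumption
  have h3 : ({y, z, x} : Finset (Fin k)).card = 3 := by
    rw [Finset.card_insert_of_notMem (by simp [hyz, hcon.1.symm]),
      Finset.card_insert_of_notMem (by simp [hcon.2.symm])]
    rfl
  have := Finset.card_le_card this
  omega

lemma Qinv_adj {m : ℕ} {v w : GkV k} (hv : Qinv i c m v)
    (hadj : (restrict (Gk k) (Om i c)).Adj v w) : Qinv i c m w := by
  obtain ⟨hadj, hvO, hwO⟩ := hadj
  match v, w with
  | .inl y, .inl z => exact absurd hadj not_adj_inl_inl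
  | .inr S, .inr T => exact absurd hadj not_adj_inr_inr
  | .inr S, .inl z =>
    have hz : z ∈ S.val := hadj
    have hzi : i ≤ (z : ℕ) := by
      by_contra h; exact hwO (by rw [mem_Om_inl]; omega)
    exact ⟨hzi, hv z hz hzi⟩
  | .inl y, .inr S =>
    have hy : y ∈ S.val := hadj
    obtain ⟨hyi, hyc⟩ := hv
    intro z hz hzi
    by_cases hyz : y = z
    · rw [← hyz]; exact hyc
    · by_contra hne
      apply hwO
      rw [mem_Om_inr]
      constructor
      · intro x hx
        rcases pair_eq S.2 hy hz hyz x hx with rfl | rfl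
        · exact hyi
        · exact hzi
      · exact ⟨y, hy, z, hz, by rw [hyc]; exact fun h => hne h.symm⟩

lemma Qinv_reach {m : ℕ} {v w : GkV k} (hv : Qinv i c m v)
    (h : (restrict (Gk k) (Om i c)).Reachable v w) : Qinv i c m w := by
  obtain ⟨p⟩ := h
  induction p with
  | nil => exact hv
  | cons hadj p ih => exact ih (Qinv_adj i c hv hadj)

end OmSec

section Main

variable {k i : ℕ} {c : Fin k → ℕ}

lemma exists_Q (H1 : ∀ x : Fin k, c x < 3) {a : GkV k} (ha : a ∉ Om i c) :
    ∃ m < 3, Qinv i c m a := by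
  match a with
  | .inl y =>
    have hy : i ≤ (y : ℕ) := by
      by_contra h; exact ha (by rw [mem_Om_inl]; omega)
    exact ⟨c y, H1 y, hy, rfl⟩
  | .inr S =>
    by_cases h : ∃ y ∈ S.val, i ≤ (y : ℕ)
    · obtain ⟨y, hy, hyi⟩ := h
      refine ⟨c y, H1 y, ?_⟩
      intro z hz hzi
      by_cases hyz : y = z
      · rw [← hyz]
      · by_contra hne
        apply ha
        rw [mem_Om_inr]
        refine ⟨fun x hx => ?_, y, hy, z, hz, fun h' => hne h'.symm⟩
        rcases pair_eq S.2 hy hz hyz x hx with rfl | rfl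
        · exact hyi
        · exact hzi
    · push_neg at h
      exact ⟨0, by omega, fun y hy hyi => absurd hyi (by have := h y hy; omega)⟩

lemma other_colors (m : ℕ) : ∃ m1 m2, m1 < 3 ∧ m2 < 3 ∧ m1 ≠ m2 ∧ m1 ≠ m ∧ m2 ≠ m :=
  ⟨(m + 1) % 3, (m + 2) % 3, by omega, by omega, by omega, by omega, by omega⟩

lemma Om_cond1 (H1 : ∀ x : Fin k, c x < 3)
    (H2 : ∀ m < 3, ∃ x : Fin k, i ≤ (x : ℕ) ∧ c x = m) :
    ∀ C, IsCompOf (Gk k) (Om i c) C → nbhd (Gk k) C ≠ Om i c := by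
  rintro C ⟨a, ha, rfl⟩
  obtain ⟨m, hm3, hQ⟩ := exists_Q H1 ha
  obtain ⟨m1, m2, h13, h23, h12, h1m, h2m⟩ := other_colors m
  obtain ⟨x1, hx1i, hx1c⟩ := H2 m1 h13
  obtain ⟨x2, hx2i, hx2c⟩ := H2 m2 h23
  have hx12 : x1 ≠ x2 := fun h => h12 (by rw [← hx1c, ← hx2c, h])
  set P : {S : Finset (Fin k) // S.card = 2} := ⟨{x1, x2}, Finset.card_pair hx12⟩ with hP
  have hPO : Sum.inr P ∈ Om i c := by
    rw [mem_Om_inr]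
    constructor
    · intro x hx
      rcases Finset.mem_insert.mp hx with rfl | hx
      · exact hx1i
      · rw [Finset.mem_singleton.mp hx]; exact hx2i
    · exact ⟨x1, by simp [hP], x2, by simp [hP], by rw [hx1c, hx2c]; exact h12⟩
  intro hEq
  rw [← hEq] at hPO
  obtain ⟨hPC, v, hvC, hadj⟩ := hPO
  match v with
  | .inl z =>
    have hz : z ∈ P.val := hadj
    have hQz := Qinv_reach i c hQ hvC.2
    obtain ⟨-, hzc⟩ := hQz
    rcases Finset.mem_insert.mp hz with rfl | hz
    · exact h1m (by rw [← hx1c, hzc])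
    · rw [Finset.mem_singleton.mp hz] at hzc
      exact h2m (by rw [← hx2c, hzc])
  | .inr T => exact absurd hadj not_adj_inr_inr

lemma inl_in_nbhd {j x0 : Fin k} (hj : (j : ℕ) < i) (hx0 : i ≤ (x0 : ℕ)) :
    Sum.inl j ∈ nbhd (Gk k)
      {b | b ∉ Om i c ∧ (restrict (Gk k) (Om i c)).Reachable (Sum.inl x0) b} := by
  have hjx : j ≠ x0 := fun h => by rw [h] at hj; omega
  have hx0O : Sum.inl x0 ∉ Om i c := by rw [mem_Om_inl]; omega
  set P : {S : Finset (Fin k) // S.card = 2} := ⟨{j, x0}, Finset.card_pair hjx⟩ with hP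
  have hPO : Sum.inr P ∉ Om i c := by
    rw [mem_Om_inr]
    rintro ⟨hall, -⟩
    exact absurd (hall j (by simp [hP])) (by omega)
  refine ⟨fun h => h.1 (by rw [mem_Om_inl]; exact hj), Sum.inr P, ⟨hPO, ?_⟩, ?_⟩
  · exact SimpleGraph.Adj.reachable ⟨show x0 ∈ P.val by simp [hP], hx0O, hPO⟩
  · show j ∈ P.val
    simp [hP]
lemma inr_in_nbhd {S : {S : Finset (Fin k) // S.card = 2}} {x0 : Fin k}
    (hS : Sum.inr S ∈ Om i c) (hx0S : x0 ∈ S.val) (hx0 : i ≤ (x0 : ℕ)) :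
    Sum.inr S ∈ nbhd (Gk k)
      {b | b ∉ Om i c ∧ (restrict (Gk k) (Om i c)).Reachable (Sum.inl x0) b} := by
  have hx0O : Sum.inl x0 ∉ Om i c := by rw [mem_Om_inl]; omega
  exact ⟨fun h => h.1 hS, Sum.inl x0, ⟨hx0O, SimpleGraph.Reachable.refl _⟩, hx0S⟩

lemma Om_cond2 (H1 : ∀ x : Fin k, c x < 3)
    (H2 : ∀ m < 3, ∃ x : Fin k, i ≤ (x : ℕ) ∧ c x = m) :
    ∀ u ∈ Om i c, ∀ v ∈ Om i c, u ≠ v →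
      (Gk k).Adj u v ∨ ∃ C, IsCompOf (Gk k) (Om i c) C ∧
        u ∈ nbhd (Gk k) C ∧ v ∈ nbhd (Gk k) C := by
  intro u hu v hv huv
  match u, v with
  | .inl j, .inl j' =>
    right
    obtain ⟨x0, hx0i, -⟩ := H2 0 (by omega)
    have hx0O : Sum.inl x0 ∉ Om i c := by rw [mem_Om_inl]; omega
    exact ⟨_, ⟨Sum.inl x0, hx0O, rfl⟩, inl_in_nbhd hu hx0i, inl_in_nbhd hv hx0i⟩
  | .inl j, .inr S =>
    by_cases hjS : j ∈ S.val
    · exact Or.inl hjS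
    right
    obtain ⟨hall, x, hx, -⟩ := (mem_Om_inr i c).mp hv
    have hxi := hall x hx
    have hxO : Sum.inl x ∉ Om i c := by rw [mem_Om_inl]; omega
    exact ⟨_, ⟨Sum.inl x, hxO, rfl⟩, inl_in_nbhd hu hxi, inr_in_nbhd hv hx hxi⟩
  | .inr S, .inl j =>
    by_cases hjS : j ∈ S.val
    · exact Or.inl hjS
    right
    obtain ⟨hall, x, hx, -⟩ := (mem_Om_inr i c).mp hu
    have hxi := hall x hx
    have hxO : Sum.inl x ∉ Om i c := by rw [mem_Om_inl]; omega
    exact ⟨_, ⟨Sum.inl x, hxO, rfl⟩, inr_in_nbhd hu hx hxi, inl_in_nbhd hv hxi⟩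
  | .inr S, .inr T =>
    right
    obtain ⟨hSall, xs, hxs, ys, hys, hScol⟩ := (mem_Om_inr i c).mp hu
    obtain ⟨hTall, xt, hxt, yt, hyt, hTcol⟩ := (mem_Om_inr i c).mp hv
    have hex : ∃ p q, p ∈ S.val ∧ q ∈ T.val ∧ c p = c q := by
      by_cases e1 : c xs = c xt
      · exact ⟨xs, xt, hxs, hxt, e1⟩
      by_cases e2 : c xs = c yt
      · exact ⟨xs, yt, hxs, hyt, e2⟩
      by_cases e3 : c ys = c xt
      · exact ⟨ys, xt, hys, hxt, e3⟩
      by_cases e4 : c ys = c yt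
      · exact ⟨ys, yt, hys, hyt, e4⟩
      have := H1 xs; have := H1 ys; have := H1 xt; have := H1 yt
      omega
    obtain ⟨p, q, hp, hq, hpq⟩ := hex
    have hpi := hSall p hp
    have hqi := hTall q hq
    have hpO : Sum.inl p ∉ Om i c := by rw [mem_Om_inl]; omega
    have hqO : Sum.inl q ∉ Om i c := by rw [mem_Om_inl]; omega
    refine ⟨_, ⟨Sum.inl p, hpO, rfl⟩, inr_in_nbhd hu hp hpi, fun h => h.1 hv,
      Sum.inl q, ⟨hqO, ?_⟩, hq⟩
    by_cases hpq' : p = q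
    · rw [hpq']
    set P : {S : Finset (Fin k) // S.card = 2} := ⟨{p, q}, Finset.card_pair hpq'⟩ with hP
    have hPO : Sum.inr P ∉ Om i c := by
      rw [mem_Om_inr]
      rintro ⟨-, x, hx, y, hy, hxy⟩
      apply hxy
      have hx' : x = p ∨ x = q := by
        rcases Finset.mem_insert.mp hx with rfl | hx
        · exact Or.inl rfl
        · exact Or.inr (Finset.mem_singleton.mp hx)
      have hy' : y = p ∨ y = q := by
        rcases Finset.mem_insert.mp hy with rfl | hy
        · exact Or.inl rfl
        · exact Or.inr (Finset.mem_singleton.mp hy)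
      rcases hx' with rfl | rfl <;> rcases hy' with rfl | rfl <;> omega
    exact SimpleGraph.Reachable.trans
      (SimpleGraph.Adj.reachable ⟨adj_inl_inr.mpr (by simp [hP]), hpO, hPO⟩)
      (SimpleGraph.Adj.reachable ⟨adj_inr_inl.mpr (by simp [hP]), hPO, hqO⟩)

lemma Om_free (H2 : ∀ m < 3, ∃ x : Fin k, i ≤ (x : ℕ) ∧ c x = m) :
    IsFree (Gk k) (Om i c) := by
  intro v hv
  match v with
  | .inl j =>
    obtain ⟨x0, hx0i, -⟩ := H2 0 (by omega)
    have hj : (j : ℕ) < i := hv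
    have hjx : j ≠ x0 := fun h => by rw [h] at hj; omega
    set P : {S : Finset (Fin k) // S.card = 2} := ⟨{j, x0}, Finset.card_pair hjx⟩ with hP
    have hPO : Sum.inr P ∉ Om i c := by
      rw [mem_Om_inr]
      rintro ⟨hall, -⟩
      exact absurd (hall j (by simp [hP])) (by omega)
    exact ⟨Sum.inr P, hPO, show j ∈ P.val by simp [hP]⟩
  | .inr S =>
    obtain ⟨hall, x, hx, -⟩ := (mem_Om_inr i c).mp hv
    have hxi := hall x hx
    exact ⟨Sum.inl x, by rw [mem_Om_inl]; omega, hx⟩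

lemma Om_mem (H1 : ∀ x : Fin k, c x < 3)
    (H2 : ∀ m < 3, ∃ x : Fin k, i ≤ (x : ℕ) ∧ c x = m) :
    IsPMC (Gk k) (Om i c) ∧ IsFree (Gk k) (Om i c) ∧
      ∀ j : Fin k, Sum.inl j ∈ Om i c ↔ (j : ℕ) < i :=
  ⟨⟨Om_cond1 H1 H2, Om_cond2 H1 H2⟩, Om_free H2, fun _ => Iff.rfl⟩

end Main

lemma inr_pair_mem_Om {k i : ℕ} {c : Fin k → ℕ} {x y : Fin k} (hxy : x ≠ y)
    (hxi : i ≤ (x : ℕ)) (hyi : i ≤ (y : ℕ)) :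
    (Sum.inr ⟨{x, y}, Finset.card_pair hxy⟩ ∈ Om i c) ↔ c x ≠ c y := by
  rw [mem_Om_inr]
  constructor
  · rintro ⟨-, a, ha, b, hb, hab⟩
    have ha' : a = x ∨ a = y := by
      rcases Finset.mem_insert.mp ha with rfl | ha
      · exact Or.inl rfl
      · exact Or.inr (Finset.mem_singleton.mp ha)
    have hb' : b = x ∨ b = y := by
      rcases Finset.mem_insert.mp hb with rfl | hb
      · exact Or.inl rfl
      · exact Or.inr (Finset.mem_singleton.mp hb)
    rcases ha' with rfl | rfl <;> rcases hb' with rfl | rfl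
    · exact absurd rfl hab
    · exact hab
    · exact fun h => hab h.symm
    · exact absurd rfl hab
  · intro h
    refine ⟨?_, x, by simp, y, by simp, h⟩
    intro z hz
    rcases Finset.mem_insert.mp hz with rfl | hz
    · exact hxi
    · rw [Finset.mem_singleton.mp hz]; exact hyi

theorem stmt9 (k i : ℕ) (hik : i ≤ k) :
    stirling (k - i) 3 ≤
      {Ω : Set (GkV k) | IsPMC (Gk k) Ω ∧ IsFree (Gk k) Ω ∧
        ∀ j : Fin k, Sum.inl j ∈ Ω ↔ (j : ℕ) < i}.ncard := by
  classical
  set n := k - i with hn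
  have hmemF : ∀ l ∈ Flist n 3,
      (∀ x : Fin k, (fun x : Fin k => l.getD ((x : ℕ) - i) 0) x < 3) ∧
      (∀ m < 3, ∃ x : Fin k, i ≤ (x : ℕ) ∧ (fun x : Fin k => l.getD ((x : ℕ) - i) 0) x = m) := by
    intro l hl
    have hlen := Flist_length hl
    have hvals := Flist_values hl
    constructor
    · intro x
      show l.getD ((x : ℕ) - i) 0 < 3
      by_cases h : (x : ℕ) - i < l.length
      · exact hvals.1 _ (getD_mem h)
      · rw [List.getD_eq_default _ _ (by omega)]; omega
    · intro m hm
      obtain ⟨p, hp, hpm⟩ := getD_of_mem (hvals.2 m hm)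
      rw [hlen] at hp
      refine ⟨⟨i + p, by omega⟩, by simp, ?_⟩
      simpa [Nat.add_sub_cancel_left] using hpm
  set g : List ℕ → Set (GkV k) := fun l => Om i (fun x : Fin k => l.getD ((x : ℕ) - i) 0)
    with hg
  have hmem : ∀ l ∈ Flist n 3, g l ∈
      {Ω : Set (GkV k) | IsPMC (Gk k) Ω ∧ IsFree (Gk k) Ω ∧
        ∀ j : Fin k, Sum.inl j ∈ Ω ↔ (j : ℕ) < i} := by
    intro l hl
    exact Om_mem (hmemF l hl).1 (hmemF l hl).2
  have hinj : Set.InjOn g (Flist n 3) := by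
    intro l hl l' hl' hgl
    refine (Flist_inj hl hl' ?_).1
    intro p q hp hq
    by_cases hpq : p = q
    · subst hpq; simp
    have hxy : (⟨i + p, by omega⟩ : Fin k) ≠ ⟨i + q, by omega⟩ := by
      intro h
      rw [Fin.mk.injEq] at h
      omega
    set P : {S : Finset (Fin k) // S.card = 2} :=
      ⟨{(⟨i + p, by omega⟩ : Fin k), ⟨i + q, by omega⟩}, Finset.card_pair hxy⟩ with hP
    have key : ∀ l'' : List ℕ,
        (Sum.inr P ∈ Om i (fun x : Fin k => l''.getD ((x : ℕ) - i) 0)) ↔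
          ¬ (l''.getD p 0 = l''.getD q 0) := by
      intro l''
      rw [hP, inr_pair_mem_Om hxy (by simp) (by simp)]
      simp [Nat.add_sub_cancel_left]
    have hio : (Sum.inr P ∈ g l) ↔ (Sum.inr P ∈ g l') := by rw [hgl]
    simp only [hg] at hio
    exact not_iff_not.mp ((key l).symm.trans (hio.trans (key l')))
  calc stirling n 3 = (Flist n 3).card := (Flist_card n 3).symm
    _ = ((Flist n 3).image g).card := (Finset.card_image_of_injOn hinj).symm
    _ = (((Flist n 3).image g : Finset (Set (GkV k))) : Set (Set (GkV k))).ncard :=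
        (Set.ncard_coe_finset _).symm
    _ ≤ _ := by
        apply Set.ncard_le_ncard ?_ (Set.toFinite _)
        intro Ω hΩ
        simp only [Finset.coe_image, Set.mem_image, Finset.mem_coe] at hΩ
        obtain ⟨l, hl, rfl⟩ := hΩ
        exact hmem l hl
end

section
/- With M(G, V_k) as below, there is no free PMC Ω of M(G, V_k) with V_k ⊆ Ω. -/
/-- `G` together with a vertex `M_X` for each nonempty `X ⊆ Vk`, adjacent exactly to `X`. -/
def Mgraph {V : Type*} (G : SimpleGraph V) (Vk : Set V) :
    SimpleGraph (V ⊕ {X : Set V // X ⊆ Vk ∧ X.Nonempty}) where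
  Adj a b := match a, b with
    | .inl u, .inl w => G.Adj u w
    | .inl u, .inr X => u ∈ X.val
    | .inr X, .inl u => u ∈ X.val
    | .inr _, .inr _ => False
  symm := ⟨by rintro (u|X) (w|Y) h <;> simp_all <;> exact h.symm⟩
  loopless := ⟨by rintro (u|X) h <;> simp_all⟩

theorem stmt13 {V : Type*} [Fintype V] (G : SimpleGraph V) (Vk : Set V)
    (hvc : ∀ a b, G.Adj a b → a ∈ Vk ∨ b ∈ Vk) (hne : Vk.Nonempty) :
    ¬ ∃ Ω : Set (V ⊕ {X : Set V // X ⊆ Vk ∧ X.Nonempty}),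
      IsPMC (Mgraph G Vk) Ω ∧ IsFree (Mgraph G Vk) Ω ∧ ∀ v ∈ Vk, Sum.inl v ∈ Ω := by
  rintro ⟨Ω, ⟨hfull, hcliq⟩, hfree, hsub⟩
  set M : V ⊕ {X : Set V // X ⊆ Vk ∧ X.Nonempty} := Sum.inr ⟨Vk, subset_rfl, hne⟩ with hMdef
  have hnbr : ∀ b, (Mgraph G Vk).Adj M b → b ∈ Ω := by
    rintro (v | X) h
    · exact hsub v h
    · exact absurd h (by simp [Mgraph, hMdef])
  by_cases hMΩ : M ∈ Ω
  · obtain ⟨w, hwΩ, hadj⟩ := hfree M hMΩ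
    exact hwΩ (hnbr w hadj)
  · have hC : IsCompOf (Mgraph G Vk) Ω
        {b | b ∉ Ω ∧ (restrict (Mgraph G Vk) Ω).Reachable M b} := ⟨M, hMΩ, rfl⟩
    have hCeq : {b | b ∉ Ω ∧ (restrict (Mgraph G Vk) Ω).Reachable M b} = {M} := by
      ext b
      simp only [Set.mem_setOf_eq, Set.mem_singleton_iff]
      constructor
      · rintro ⟨hb, ⟨p⟩⟩
        cases p with
        | nil => rfl
        | cons h p => exact absurd (hnbr _ h.1) h.2.2
      · rintro rfl; exact ⟨hMΩ, SimpleGraph.Reachable.refl _⟩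
    have hnbhd : nbhd (Mgraph G Vk) {M} ⊆ Ω := by
      rintro w ⟨hw, c, hc, hadj⟩
      rw [Set.mem_singleton_iff] at hc; subst hc
      exact hnbr w hadj.symm
    have hex : ∃ u ∈ Ω, u ∉ nbhd (Mgraph G Vk) {M} := by
      by_contra h
      push_neg at h
      exact (hCeq ▸ hfull _ hC) (Set.Subset.antisymm hnbhd h)
    obtain ⟨u, huΩ, hun⟩ := hex
    match u with
    | Sum.inr X =>
      obtain ⟨w, hwΩ, hadj⟩ := hfree _ huΩ
      match w with
      | Sum.inl v =>
        have hv : v ∈ X.val := hadj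
        exact hwΩ (hsub v (X.prop.1 hv))
      | Sum.inr Y => exact hadj.elim
    | Sum.inl v =>
      have hvk : v ∉ Vk := by
        intro hv
        exact hun ⟨by simp, M, rfl, hv⟩
      obtain ⟨w, hwΩ, hadj⟩ := hfree _ huΩ
      match w with
      | Sum.inl x =>
        have hgx : G.Adj v x := hadj
        rcases hvc v x hgx with h | h
        · exact hvk h
        · exact hwΩ (hsub x h)
      | Sum.inr Y =>
        have : v ∈ Y.val := hadj
        exact hvk (Y.prop.1 this)
end
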